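/- Let n ≥ 1 and s > 0. Then sⁿ(1 + 2e^{-πs²})ⁿ ≤ ρ_s(ℤⁿ) ≤ sⁿ(1 + (2 + 1/s)e^{-πs²})ⁿ, where ρ_s(ℤⁿ) = Σ_{x∈ℤⁿ} exp(-π‖x‖²/s²). -/

import Mathlib

open Real

section Stmt13Aux

private lemma sumGaussNat13 {c : ℝ} (hc : 0 < c) :
    Summable fun n : ℕ => Real.exp (-c * (n:ℝ)^2) := by
  refine Summable.of_nonneg_of_le (fun n => (Real.exp_pos _).le) (fun n => ?_)
    (summable_geometric_of_lt_one (Real.exp_pos (-c)).le (Real.exp_lt_one_iff.mpr (by linarith)))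
  rw [← Real.exp_nat_mul]
  apply Real.exp_le_exp.mpr
  have h1 : (n:ℝ) ≤ (n:ℝ)^2 := by
    rcases Nat.eq_zero_or_pos n with h | h
    · simp [h]
    · have : (1:ℝ) ≤ n := by exact_mod_cast h
      nlinarith
  nlinarith

private lemma sumGaussShift13 {c : ℝ} (hc : 0 < c) (k : ℕ) :
    Summable fun n : ℕ => Real.exp (-c * ((n:ℝ)+k)^2) := by
  have := (sumGaussNat13 hc).comp_injective (add_left_injective k)
  refine this.congr fun n => ?_
  show Real.exp (-c * ((↑(n + k) : ℝ))^2) = _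
  push_cast
  ring_nf

private lemma sumGaussInt13 {c : ℝ} (hc : 0 < c) :
    Summable fun n : ℤ => Real.exp (-c * (n:ℝ)^2) := by
  apply Summable.of_nat_of_neg_add_one
  · exact_mod_cast sumGaussNat13 hc
  · refine (sumGaussShift13 hc 1).congr fun n => ?_
    push_cast
    ring_nf

private lemma tailLe13 {s : ℝ} (hs : 0 < s) :
    (∑' n : ℕ, Real.exp (-(π*s^2) * ((n:ℝ)+2)^2)) ≤ Real.exp (-(π*s^2)) / (2*s) := by
  set c := π * s^2 with hcdef
  have hc : 0 < c := by positivity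
  rcases le_or_gt (1/2 : ℝ) s with hbig | hsmall
  · -- geometric bound, valid for s ≥ 1/2
    set r := Real.exp (-(3*c)) with hrdef
    have hr1 : r < 1 := Real.exp_lt_one_iff.mpr (by linarith)
    have hr0 : 0 < r := Real.exp_pos _
    have key : ∀ n : ℕ, Real.exp (-c * ((n:ℝ)+2)^2) ≤ Real.exp (-c) * r^(n+1) := by
      intro n
      rw [hrdef, ← Real.exp_nat_mul, ← Real.exp_add]
      apply Real.exp_le_exp.mpr
      push_cast
      nlinarith [hc, sq_nonneg ((n:ℝ))]
    have hsum2 : Summable fun n : ℕ => Real.exp (-c) * r^(n+1) := by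
      apply Summable.mul_left
      exact ((summable_geometric_of_lt_one hr0.le hr1).mul_left r).congr
        (fun n => by rw [pow_succ'])
    have := Summable.tsum_le_tsum key (sumGaussShift13 hc 2) hsum2
    refine this.trans ?_
    have hT : (∑' n : ℕ, Real.exp (-c) * r^(n+1)) = Real.exp (-c) * (r * (1-r)⁻¹) := by
      rw [tsum_mul_left]
      congr 1
      calc (∑' n : ℕ, r^(n+1)) = ∑' n : ℕ, r * r^n := by
            congr 1; funext n; rw [pow_succ']
        _ = r * (1-r)⁻¹ := by rw [tsum_mul_left, tsum_geometric_of_lt_one hr0.le hr1]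
    rw [hT, div_eq_mul_inv]
    apply mul_le_mul_of_nonneg_left _ (Real.exp_pos _).le
    rw [← div_eq_mul_inv, ← one_div, div_le_div_iff₀ (by linarith) (by linarith)]
    have hexp : 1 + 3*c ≤ Real.exp (3*c) := by
      have := Real.add_one_le_exp (3*c); linarith
    have h2 : 1 + 2*s ≤ Real.exp (3*c) := by
      have hpi : (3:ℝ) < π := Real.pi_gt_three
      have : 2*s ≤ 3*c := by rw [hcdef]; nlinarith
      linarith
    have hrinv : r * Real.exp (3*c) = 1 := by
      rw [hrdef, ← Real.exp_add]; norm_num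
    nlinarith [hr0, h2, hrinv]
  · -- integral comparison, valid for s ≤ 2/π (in particular s < 1/2)
    set f : ℝ → ℝ := fun x => Real.exp (-c * x^2) with hfdef
    have hint : MeasureTheory.Integrable f := integrable_exp_neg_mul_sq hc
    have hIoi1 : MeasureTheory.IntegrableOn f (Set.Ioi 1) := hint.integrableOn
    have hIoc01 : MeasureTheory.IntegrableOn f (Set.Ioc 0 1) := hint.integrableOn
    have E0 : (∫ x in Set.Ioi (0:ℝ), f x) = 1/(2*s) := by
      rw [hfdef]
      simp only
      rw [integral_gaussian_Ioi, hcdef]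
      have h1 : π / (π * s^2) = (s⁻¹)^2 := by
        rw [inv_pow, eq_comm, inv_eq_iff_eq_inv, eq_comm, inv_div,
          mul_comm, mul_div_assoc, div_self Real.pi_ne_zero, mul_one]
      rw [h1, Real.sqrt_sq (by positivity), one_div, mul_inv, ← one_div]
      field_simp
    have E1 : (1 - Real.exp (-c))/(2*s) ≤ ∫ x in Set.Ioc (0:ℝ) 1, f x := by
      have heq : (∫ x in Set.Ioc (0:ℝ) 1, f x) = ∫ x in (0:ℝ)..1, f x := by
        rw [intervalIntegral.integral_of_le zero_le_one]
      rw [heq]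
      have hcont : Continuous fun x : ℝ => Real.exp (-c * x) := by continuity
      have hmono : (∫ x in (0:ℝ)..1, Real.exp (-c * x)) ≤ ∫ x in (0:ℝ)..1, f x := by
        apply intervalIntegral.integral_mono_on zero_le_one
          (hcont.intervalIntegrable 0 1) hint.intervalIntegrable
        intro x hx
        apply Real.exp_le_exp.mpr
        nlinarith [mul_nonneg (mul_nonneg hc.le hx.1) (sub_nonneg.mpr hx.2)]
      have hval : (∫ x in (0:ℝ)..1, Real.exp (-c * x)) = (1 - Real.exp (-c))/c := by
        have hderiv : ∀ x ∈ Set.uIcc (0:ℝ) 1,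
            HasDerivAt (fun x => -Real.exp (-c * x)/c) (Real.exp (-c * x)) x := by
          intro x _
          have h1 : HasDerivAt (fun x : ℝ => -c * x) (-c) x := by
            simpa using (hasDerivAt_id x).const_mul (-c)
          have h2 := (h1.exp).neg.div_const c
          convert h2 using 1
          · rfl
          · rfl
          · rfl
          · rw [mul_neg, neg_neg, mul_div_assoc, div_self hc.ne', mul_one]
        rw [intervalIntegral.integral_eq_sub_of_hasDerivAt hderiv
          (hcont.intervalIntegrable 0 1)]
        simp
        ring
      have hcle : c ≤ 2*s := by
        have hpi : π ≤ 4 := by linarith [Real.pi_le_four]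
        rw [hcdef]; nlinarith
      have : (1 - Real.exp (-c))/(2*s) ≤ (1 - Real.exp (-c))/c := by
        apply div_le_div_of_nonneg_left _ hc hcle
        have := Real.exp_le_one_iff.mpr (by linarith : -c ≤ 0)
        linarith
      linarith
    have Esplit : (∫ x in Set.Ioc (0:ℝ) 1, f x) + (∫ x in Set.Ioi (1:ℝ), f x)
        = ∫ x in Set.Ioi (0:ℝ), f x := by
      rw [← MeasureTheory.setIntegral_union (Set.Ioc_disjoint_Ioi le_rfl)
        measurableSet_Ioi hIoc01 hIoi1, Set.Ioc_union_Ioi_eq_Ioi zero_le_one]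
    have Etail : (∫ x in Set.Ioi (1:ℝ), f x) ≤ Real.exp (-c) / (2*s) := by
      have h1 : (∫ x in Set.Ioi (1:ℝ), f x) = 1/(2*s) - ∫ x in Set.Ioc (0:ℝ) 1, f x := by
        rw [← E0]; linarith
      rw [h1]
      have : 1/(2*s) - (1 - Real.exp (-c))/(2*s) = Real.exp (-c)/(2*s) := by
        field_simp
        ring
      linarith
    refine (Real.tsum_le_of_sum_range_le (fun n => (Real.exp_pos _).le) fun N => ?_).trans Etail
    have anti : AntitoneOn f (Set.Icc (1:ℝ) (1 + N)) := by
      intro x hx y hy hxy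
      apply Real.exp_le_exp.mpr
      nlinarith [mul_nonneg (mul_nonneg hc.le (sub_nonneg.mpr hxy))
        (by linarith [hx.1] : (0:ℝ) ≤ x + y)]
    have h1 := anti.sum_le_integral
    have h2 : (∑ i ∈ Finset.range N, Real.exp (-c * ((i:ℝ)+2)^2))
        = ∑ i ∈ Finset.range N, f (1 + ((i:ℕ) + 1 : ℕ)) := by
      apply Finset.sum_congr rfl
      intro i _
      rw [hfdef]
      push_cast
      ring_nf
    rw [h2]
    refine h1.trans ?_
    rw [intervalIntegral.integral_of_le (le_add_of_nonneg_right (Nat.cast_nonneg N))]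
    apply MeasureTheory.setIntegral_mono_set hIoi1
    · filter_upwards with x using (Real.exp_pos _).le
    · apply HasSubset.Subset.eventuallyLE
      exact Set.Ioc_subset_Ioi_self

private lemma thetaBounds13 {s : ℝ} (hs : 0 < s) :
    1 + 2 * Real.exp (-(π*s^2)) ≤ (∑' k : ℤ, Real.exp (-(π*s^2) * (k:ℝ)^2)) ∧
    (∑' k : ℤ, Real.exp (-(π*s^2) * (k:ℝ)^2)) ≤ 1 + (2 + 1/s) * Real.exp (-(π*s^2)) := by
  set c := π * s^2 with hcdef
  have hc : 0 < c := by positivity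
  have hshift1 : Summable fun n : ℕ => Real.exp (-c * ((n:ℝ)+1)^2) := by
    have := sumGaussShift13 hc 1
    simpa using this
  have hsplit : (∑' k : ℤ, Real.exp (-c * (k:ℝ)^2))
      = (∑' n : ℕ, Real.exp (-c * (n:ℝ)^2))
        + ∑' n : ℕ, Real.exp (-c * ((n:ℝ)+1)^2) := by
    rw [tsum_of_nat_of_neg_add_one (by exact_mod_cast sumGaussNat13 hc)
      (by refine hshift1.congr fun n => ?_; push_cast; ring_nf)]
    congr 1
    · exact tsum_congr fun n => by push_cast; ring_nf
  have hnat : (∑' n : ℕ, Real.exp (-c * (n:ℝ)^2))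
      = 1 + ∑' n : ℕ, Real.exp (-c * ((n:ℝ)+1)^2) := by
    have h00 : Real.exp (-c * (((0:ℕ):ℝ))^2) = 1 := by norm_num
    rw [Summable.tsum_eq_zero_add (sumGaussNat13 hc), h00]
    congr 1
    exact tsum_congr fun n => by push_cast; ring_nf
  set T := ∑' n : ℕ, Real.exp (-c * ((n:ℝ)+1)^2) with hTdef
  have hG : (∑' k : ℤ, Real.exp (-c * (k:ℝ)^2)) = 1 + 2*T := by
    rw [hsplit, hnat]; ring
  have hT1 : Real.exp (-c) ≤ T := by
    have h := Summable.le_tsum hshift1 0 (fun j _ => (Real.exp_pos _).le)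
    have h00 : Real.exp (-c * (((0:ℕ):ℝ)+1)^2) = Real.exp (-c) := by norm_num
    rw [h00] at h
    rw [hTdef]; exact h
  have hT2 : T ≤ Real.exp (-c) + Real.exp (-c)/(2*s) := by
    rw [hTdef, Summable.tsum_eq_zero_add hshift1]
    have heq : (∑' n : ℕ, Real.exp (-c * (((n:ℝ)+1)+1)^2))
        = ∑' n : ℕ, Real.exp (-c * ((n:ℝ)+2)^2) := tsum_congr fun n => by ring_nf
    have h0 : Real.exp (-c * ((0:ℝ)+1)^2) = Real.exp (-c) := by norm_num
    push_cast
    rw [heq, h0]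
    have := tailLe13 hs
    rw [← hcdef] at this
    linarith
  constructor
  · rw [hG]; linarith
  · rw [hG]
    have hexpand : 1 + (2 + 1/s) * Real.exp (-c)
        = 1 + 2 * (Real.exp (-c) + Real.exp (-c)/(2*s)) := by
      field_simp
    rw [hexpand]
    linarith

private lemma poisson13 {s : ℝ} (hs : 0 < s) :
    (∑' k : ℤ, Real.exp (-(π * (k:ℝ)^2) / s^2))
      = s * ∑' k : ℤ, Real.exp (-(π*s^2) * (k:ℝ)^2) := by
  have ha : (0:ℝ) < (s^2)⁻¹ := by positivity
  have h := Real.tsum_exp_neg_mul_int_sq ha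
  have hL : (∑' k : ℤ, Real.exp (-(π * (k:ℝ)^2) / s^2))
      = ∑' n : ℤ, Real.exp (-π * (s^2)⁻¹ * (n:ℝ)^2) :=
    tsum_congr fun n => congrArg Real.exp (by ring)
  have hR : (∑' n : ℤ, Real.exp (-π / (s^2)⁻¹ * (n:ℝ)^2))
      = ∑' k : ℤ, Real.exp (-(π*s^2) * (k:ℝ)^2) :=
    tsum_congr fun n => congrArg Real.exp (by rw [div_inv_eq_mul]; ring)
  have hcoef : (1:ℝ) / ((s^2)⁻¹) ^ (1/2 : ℝ) = s := by
    rw [Real.inv_rpow (sq_nonneg s), ← Real.sqrt_eq_rpow, Real.sqrt_sq hs.le]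
    simp
  rw [hL, h, hR, hcoef]

private lemma piHasSum13 (g : ℤ → ℝ) (hg : Summable g) (h0 : ∀ k, 0 ≤ g k) :
    ∀ n : ℕ, HasSum (fun x : Fin n → ℤ => ∏ i, g (x i)) ((∑' k, g k) ^ n) := by
  intro n
  induction n with
  | zero =>
    have hconst : (fun x : Fin 0 → ℤ => ∏ i, g (x i)) = fun _ => (1:ℝ) := by
      funext x; simp
    rw [pow_zero, hconst]
    have h := hasSum_single (f := fun _ : Fin 0 → ℤ => (1:ℝ))
      default (fun b' hb' => absurd (Subsingleton.elim b' _) hb')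
    exact h
  | succ n ih =>
    have hg' : (0:ℤ → ℝ) ≤ g := h0
    have hF : Summable (fun y : Fin n → ℤ => ∏ i, g (y i)) := ih.summable
    have hF' : (0:(Fin n → ℤ) → ℝ) ≤ fun y : Fin n → ℤ => ∏ i, g (y i) :=
      fun y => Finset.prod_nonneg fun i _ => h0 _
    have hsummul : Summable fun p : ℤ × (Fin n → ℤ) => g p.1 * ∏ i, g (p.2 i) :=
      Summable.mul_of_nonneg (f := g) (g := fun y : Fin n → ℤ => ∏ i, g (y i)) hg hF hg' hF'
    have hmul := hg.hasSum.mul ih hsummul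
    have hEq : (fun x : Fin (n+1) → ℤ => ∏ i, g (x i))
        ∘ (Fin.consEquiv fun _ : Fin (n+1) => ℤ)
        = fun p : ℤ × (Fin n → ℤ) => g p.1 * ∏ i, g (p.2 i) := by
      funext p
      simp [Fin.consEquiv, Fin.prod_univ_succ]
    rw [pow_succ']
    exact (Equiv.hasSum_iff (Fin.consEquiv fun _ : Fin (n+1) => ℤ)).mp
      (by rw [hEq]; exact hmul)

end Stmt13Aux

/-- For `n ≥ 1` and `s > 0`:
`sⁿ(1 + 2e^{-πs²})ⁿ ≤ ρ_s(ℤⁿ) ≤ sⁿ(1 + (2 + 1/s)e^{-πs²})ⁿ`, where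
`ρ_s(ℤⁿ) = Σ_{x∈ℤⁿ} exp(-π‖x‖²/s²)`. -/
theorem stmt_13 (n : ℕ) (hn : 1 ≤ n) (s : ℝ) (hs : 0 < s) :
    s ^ n * (1 + 2 * Real.exp (-π * s ^ 2)) ^ n ≤
      (∑' x : Fin n → ℤ, Real.exp (-π * (∑ i, ((x i : ℝ)) ^ 2) / s ^ 2)) ∧
    (∑' x : Fin n → ℤ, Real.exp (-π * (∑ i, ((x i : ℝ)) ^ 2) / s ^ 2)) ≤
      s ^ n * (1 + (2 + 1 / s) * Real.exp (-π * s ^ 2)) ^ n := by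
  set g : ℤ → ℝ := fun k => Real.exp (-(π * (k:ℝ)^2) / s^2) with hgdef
  have hcpos : (0:ℝ) < π / s^2 := by positivity
  have hgsum : Summable g := by
    refine (sumGaussInt13 hcpos).congr fun k => ?_
    rw [hgdef]
    congr 1
    field_simp
  have hg0 : ∀ k, 0 ≤ g k := fun k => (Real.exp_pos _).le
  have hrw : (∑' x : Fin n → ℤ, Real.exp (-π * (∑ i, ((x i : ℝ)) ^ 2) / s ^ 2))
      = (∑' k : ℤ, g k) ^ n := by
    rw [← (piHasSum13 g hgsum hg0 n).tsum_eq]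
    refine tsum_congr fun x => ?_
    rw [hgdef]
    simp only
    rw [← Real.exp_sum]
    congr 1
    rw [neg_mul, Finset.mul_sum]
    rw [neg_div, Finset.sum_div]
    simp only [neg_div]
    rw [← Finset.sum_neg_distrib]
  have hP : (∑' k : ℤ, g k) = s * ∑' k : ℤ, Real.exp (-(π*s^2) * (k:ℝ)^2) := poisson13 hs
  obtain ⟨hlow, hhigh⟩ := thetaBounds13 hs
  have hE : Real.exp (-π * s^2) = Real.exp (-(π*s^2)) := by rw [neg_mul]
  rw [hrw, hP, hE]
  have hGnonneg : (0:ℝ) ≤ 1 + 2 * Real.exp (-(π*s^2)) := by positivity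
  constructor
  · rw [← mul_pow]
    exact pow_le_pow_left₀ (by positivity)
      (mul_le_mul_of_nonneg_left hlow hs.le) n
  · rw [← mul_pow]
    refine pow_le_pow_left₀ ?_ (mul_le_mul_of_nonneg_left hhigh hs.le) n
    have : (0:ℝ) ≤ ∑' k : ℤ, Real.exp (-(π*s^2) * (k:ℝ)^2) := by linarith
    positivity
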